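/- The limit as n → ∞ of i(n,2), the proportion of permutations of {1,…,n} fixing some set of size 2, equals 1 - 2e^{-3/2}. -/

import Mathlib

open scoped BigOperators

noncomputable section

/-- `π` has an invariant set of size `k`. -/
def hasInvariantSet (n k : ℕ) (π : Equiv.Perm (Fin n)) : Prop :=
  ∃ s : Finset (Fin n), s.card = k ∧ ∀ x ∈ s, π x ∈ s

/-- `i(n,k)`: the proportion of permutations of `{1,…,n}` having an invariant set of size `k`. -/
def iProp (n k : ℕ) : ℝ :=
  (Nat.card {π : Equiv.Perm (Fin n) // hasInvariantSet n k π} : ℝ) /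
    (Nat.card (Equiv.Perm (Fin n)) : ℝ)

open Equiv Function Finset

section ExtCount
open scoped Classical

variable {D α : Type*} [Fintype D] [Fintype α] [DecidableEq α]

/-- Permutations prescribed on the range of an embedding `u` (forced to act as the
conjugate of `σ`) are in bijection with permutations of the complement of the range. -/
noncomputable def extEquiv (u : D ↪ α) (σ : Equiv.Perm D) :
    {π : Equiv.Perm α // ∀ d, π (u d) = u (σ d)} ≃ Equiv.Perm {x // ¬ x ∈ Set.range u} := by
  classical
  have hmem : ∀ (π : Equiv.Perm α), (∀ d, π (u d) = u (σ d)) →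
      ∀ x : α, x ∈ Set.range u ↔ π x ∈ Set.range u := by
    intro π h x
    constructor
    · rintro ⟨d, rfl⟩; exact ⟨σ d, (h d).symm⟩
    · rintro ⟨d, hd⟩
      refine ⟨σ.symm d, ?_⟩
      have : π (u (σ.symm d)) = u d := by rw [h (σ.symm d), Equiv.apply_symm_apply]
      exact π.injective (by rw [this, hd])
  refine
    { toFun := fun π => (π : Equiv.Perm α).subtypePerm (p := fun x => ¬ x ∈ Set.range u)
        (fun x => not_congr (hmem π π.2 x).symm)
      invFun := fun τ => ⟨Equiv.Perm.subtypeCongr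
        ((Equiv.ofInjective u u.injective).permCongr σ) τ, ?_⟩
      left_inv := ?_
      right_inv := ?_ }
  · intro d
    have hp : (u d : α) ∈ Set.range u := ⟨d, rfl⟩
    rw [Equiv.Perm.subtypeCongr.left_apply _ _ hp]
    have : (⟨u d, hp⟩ : {x // x ∈ Set.range u}) = Equiv.ofInjective u u.injective d := rfl
    rw [this]
    simp [Equiv.permCongr_apply]
  · rintro ⟨π, hπ⟩
    ext x
    by_cases hx : x ∈ Set.range u
    · rw [Equiv.Perm.subtypeCongr.left_apply _ _ hx]
      obtain ⟨d, rfl⟩ := hx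
      have : (⟨u d, ⟨d, rfl⟩⟩ : {x // x ∈ Set.range u}) = Equiv.ofInjective u u.injective d := rfl
      simp only [this, Equiv.permCongr_apply, Equiv.symm_apply_apply]
      rw [hπ d]
      rfl
    · rw [Equiv.Perm.subtypeCongr.right_apply _ _ hx]
      rfl
  · intro τ
    ext x
    simp only [Equiv.Perm.subtypePerm_apply]
    rw [Equiv.Perm.subtypeCongr.right_apply _ _ x.2]

theorem card_ext (u : D ↪ α) (σ : Equiv.Perm D) :
    Nat.card {π : Equiv.Perm α // ∀ d, π (u d) = u (σ d)} =
      Nat.factorial (Fintype.card α - Fintype.card D) := by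
  classical
  rw [Nat.card_congr (extEquiv u σ), Nat.card_eq_fintype_card, Fintype.card_perm]
  congr 1
  rw [Fintype.card_subtype_compl]
  congr 1
  exact (Fintype.card_congr (Equiv.ofInjective u u.injective)).symm

namespace IProp2



/-- Index type for an ordered configuration: `i` fixed points and `j` oriented 2-cycles. -/
abbrev Dt (i j : ℕ) := Fin i ⊕ Fin j × Bool

/-- The model involution on `Dt i j`. -/
def sig0 (i j : ℕ) : Equiv.Perm (Dt i j) :=
  Equiv.sumCongr (Equiv.refl _)
    (Equiv.prodCongr (Equiv.refl _) (Function.Involutive.toPerm Bool.not (fun b => Bool.not_not b)))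

@[simp] lemma sig0_inl {i j : ℕ} (a : Fin i) : sig0 i j (Sum.inl a) = Sum.inl a := rfl

@[simp] lemma sig0_inr {i j : ℕ} (t : Fin j) (b : Bool) :
    sig0 i j (Sum.inr (t, b)) = Sum.inr (t, !b) := rfl

variable {n : ℕ}

/-- `π` contains the ordered configuration `u`. -/
def Contains (π : Equiv.Perm (Fin n)) {i j : ℕ} (u : Dt i j ↪ Fin n) : Prop :=
  ∀ d, π (u d) = u (sig0 i j d)

/-- Fixed points of `π`. -/
abbrev Fx (π : Equiv.Perm (Fin n)) := {x : Fin n // π x = x}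

/-- Points lying on 2-cycles of `π`. -/
abbrev Pt (π : Equiv.Perm (Fin n)) := {x : Fin n // π x ≠ x ∧ π (π x) = x}

/-- The involution of `Pt π` given by `π`. -/
def ptf (π : Equiv.Perm (Fin n)) (x : Pt π) : Pt π :=
  ⟨π x, by
    constructor
    · rw [x.2.2]; exact Ne.symm x.2.1
    · rw [x.2.2]⟩

@[simp] lemma ptf_coe (π : Equiv.Perm (Fin n)) (x : Pt π) : (ptf π x : Fin n) = π x := rfl

lemma ptf_ptf (π : Equiv.Perm (Fin n)) (x : Pt π) : ptf π (ptf π x) = x :=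
  Subtype.ext x.2.2

lemma ptf_ne (π : Equiv.Perm (Fin n)) (x : Pt π) : ptf π x ≠ x := by
  intro h
  exact x.2.1 (congrArg Subtype.val h)

/-- Partition of `Pt π` into 2-cycles. -/
def ptSetoid (π : Equiv.Perm (Fin n)) : Setoid (Pt π) where
  r x y := (y : Fin n) = x ∨ (y : Fin n) = π x
  iseqv := by
    constructor
    · intro x; exact Or.inl rfl
    · rintro x y (h | h)
      · exact Or.inl h.symm
      · right; rw [h, x.2.2]
    · rintro x y z (h1 | h1) (h2 | h2)
      · exact Or.inl (h2.trans h1)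
      · right; rw [h2, h1]
      · right; rw [h2, h1]
      · left; rw [h2, h1, x.2.2]

/-- The set of 2-cycles of `π`. -/
abbrev Qt (π : Equiv.Perm (Fin n)) := Quotient (ptSetoid π)

noncomputable instance (π : Equiv.Perm (Fin n)) : Fintype (Qt π) := by
  classical exact Quotient.fintype _

lemma qmk_ptf (π : Equiv.Perm (Fin n)) (x : Pt π) : (⟦ptf π x⟧ : Qt π) = ⟦x⟧ :=
  Quotient.sound (Or.inr x.2.2.symm)

lemma out_spec (π : Equiv.Perm (Fin n)) (x : Pt π) :
    (⟦x⟧ : Qt π).out = x ∨ (⟦x⟧ : Qt π).out = ptf π x := by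
  have h : (ptSetoid π).r (⟦x⟧ : Qt π).out x := Quotient.exact (Quotient.out_eq (⟦x⟧ : Qt π))
  rcases h with h | h
  · exact Or.inl (Subtype.ext h.symm)
  · exact Or.inr (Subtype.ext ((congrArg π h).trans (⟦x⟧ : Qt π).out.2.2).symm)

section W

variable (π : Equiv.Perm (Fin n)) {j : ℕ}

/-- Reconstruction of an oriented matching from 2-cycles and orientations. -/
noncomputable def mkW (v : Fin j ↪ Qt π) (c : Fin j → Bool) : Fin j × Bool → Pt π :=
  fun tb => if tb.2 = c tb.1 then (v tb.1).out else ptf π (v tb.1).out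

lemma mkW_class (v : Fin j ↪ Qt π) (c : Fin j → Bool) (tb : Fin j × Bool) :
    (⟦mkW π v c tb⟧ : Qt π) = v tb.1 := by
  unfold mkW
  split
  · exact Quotient.out_eq _
  · rw [qmk_ptf]; exact Quotient.out_eq _

lemma mkW_apply (v : Fin j ↪ Qt π) (c : Fin j → Bool) (t : Fin j) (b : Bool) :
    mkW π v c (t, b) = if b = c t then (v t).out else ptf π (v t).out := rfl

lemma mkW_inj (v : Fin j ↪ Qt π) (c : Fin j → Bool) : Function.Injective (mkW π v c) := by
  rintro ⟨t, b⟩ ⟨s, b'⟩ h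
  have hts : t = s := by
    apply v.injective
    rw [← mkW_class π v c (t, b), ← mkW_class π v c (s, b'), h]
  subst hts
  rw [mkW_apply, mkW_apply] at h
  have hbb : b = b' := by
    by_cases hb : b = c t <;> by_cases hb' : b' = c t
    · rw [hb, hb']
    · rw [if_pos hb, if_neg hb'] at h
      exact (ptf_ne π _ h.symm).elim
    · rw [if_neg hb, if_pos hb'] at h
      exact (ptf_ne π _ h).elim
    · cases b <;> cases b' <;> first | rfl | (exfalso; revert hb hb'; cases c t <;> simp)
  rw [hbb]

lemma mkW_equi (v : Fin j ↪ Qt π) (c : Fin j → Bool) (t : Fin j) (b : Bool) :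
    mkW π v c (t, !b) = ptf π (mkW π v c (t, b)) := by
  rw [mkW_apply, mkW_apply]
  by_cases hb : b = c t
  · have hnb : ¬ ((!b) = c t) := by subst hb; simp
    rw [if_neg hnb, if_pos hb]
  · have hnb : (!b) = c t := by revert hb; cases b <;> cases c t <;> simp
    rw [if_pos hnb, if_neg hb, ptf_ptf]

/-- Oriented matchings of `π` correspond to sets of 2-cycles plus orientations. -/
noncomputable def equivB2 :
    {w : Fin j × Bool ↪ Pt π // ∀ t b, w (t, !b) = ptf π (w (t, b))} ≃
      (Fin j ↪ Qt π) × (Fin j → Bool) where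
  toFun := fun p =>
    (⟨fun t => (⟦p.1 (t, false)⟧ : Qt π), by
        intro t s h
        have h' : (ptSetoid π).r (p.1 (t, false)) (p.1 (s, false)) := Quotient.exact h
        rcases h' with h' | h'
        · have := p.1.injective (Subtype.ext h')
          exact (Prod.ext_iff.1 this).1.symm
        · exfalso
          have h2 : p.1 (s, false) = p.1 (t, true) := by
            have h3 := p.2 t false
            apply Subtype.ext
            rw [h']
            have : (p.1 (t, !false) : Fin n) = (ptf π (p.1 (t, false)) : Fin n) :=
              congrArg Subtype.val h3
            simpa using this.symm
          have := p.1.injective h2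
          simpa using (Prod.ext_iff.1 this).2⟩,
     fun t => if p.1 (t, false) = (⟦p.1 (t, false)⟧ : Qt π).out then false else true)
  invFun := fun q => ⟨⟨mkW π q.1 q.2, mkW_inj π q.1 q.2⟩, fun t b => mkW_equi π q.1 q.2 t b⟩
  left_inv := by
    rintro ⟨w, hw⟩
    apply Subtype.ext
    apply Function.Embedding.ext
    rintro ⟨t, b⟩
    simp only [Function.Embedding.coeFn_mk, mkW_apply]
    have hw' : ptf π (w (t, false)) = w (t, true) := (hw t false).symm
    rcases out_spec π (w (t, false)) with h | h
    · rw [if_pos h.symm]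
      cases b
      · rw [if_pos rfl]; exact h
      · rw [if_neg (by simp)]; exact (congrArg (ptf π) h).trans hw'
    · have hne : ¬ (w (t, false) = (⟦w (t, false)⟧ : Qt π).out) := by
        intro hc
        rw [← hc] at h
        exact ptf_ne π _ h.symm
      rw [if_neg hne]
      cases b
      · rw [if_neg (by simp)]; exact (congrArg (ptf π) h).trans (ptf_ptf π _)
      · rw [if_pos rfl]; exact h.trans hw'
  right_inv := by
    rintro ⟨v, c⟩
    refine Prod.ext ?_ ?_
    · apply Function.Embedding.ext
      intro t
      exact mkW_class π v c (t, false)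
    · funext t
      simp only [Function.Embedding.coeFn_mk]
      have hcl : (⟦mkW π v c (t, false)⟧ : Qt π) = v t := mkW_class π v c (t, false)
      simp only [hcl]
      simp only [mkW_apply]
      rcases Bool.eq_false_or_eq_true (c t) with hc | hc
      · simp only [hc]
        rw [if_neg (show ¬ (false = true) by simp)]
        rw [if_neg (fun hcon => ptf_ne π _ hcon)]
      · simp only [hc]
        simp

end W

lemma card_E (π : Equiv.Perm (Fin n)) (j : ℕ) :
    Nat.card {w : Fin j × Bool ↪ Pt π // ∀ t b, w (t, !b) = ptf π (w (t, b))} =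
      (Nat.card (Qt π)).descFactorial j * 2 ^ j := by
  classical
  rw [Nat.card_congr (equivB2 π), Nat.card_prod, Nat.card_eq_fintype_card,
    Nat.card_eq_fintype_card (α := Fin j → Bool), Fintype.card_embedding_eq,
    Fintype.card_fin, Nat.card_eq_fintype_card]
  simp

/-- Splitting an ordered configuration contained in `π` into its fixed-point part and
its 2-cycle part. -/
def equivB1 (π : Equiv.Perm (Fin n)) (i j : ℕ) :
    {u : Dt i j ↪ Fin n // Contains π u} ≃
      (Fin i ↪ Fx π) ×
        {w : Fin j × Bool ↪ Pt π // ∀ t b, w (t, !b) = ptf π (w (t, b))} where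
  toFun := fun p =>
    (⟨fun a => ⟨p.1 (Sum.inl a), by simpa using p.2 (Sum.inl a)⟩, by
        intro a a' h
        have := p.1.injective (congrArg Subtype.val h)
        exact Sum.inl.injEq .. ▸ this⟩,
     ⟨⟨fun tb => ⟨p.1 (Sum.inr tb), by
          obtain ⟨t, b⟩ := tb
          have h1 := p.2 (Sum.inr (t, b))
          have h2 := p.2 (Sum.inr (t, !b))
          rw [sig0_inr] at h1 h2
          constructor
          · rw [h1]
            exact fun hc => (by simp : Sum.inr (t, !b) ≠ Sum.inr (t, b)) (p.1.injective hc)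
          · rw [h1, h2, Bool.not_not]⟩, by
        intro tb tb' h
        have := p.1.injective (congrArg Subtype.val h)
        exact Sum.inr.injEq .. ▸ this⟩, by
      intro t b
      apply Subtype.ext
      have h1 := p.2 (Sum.inr (t, b))
      rw [sig0_inr] at h1
      exact h1.symm⟩)
  invFun := fun q =>
    ⟨⟨Sum.elim (fun a => ((q.1 a : Fx π) : Fin n)) (fun tb => ((q.2.1 tb : Pt π) : Fin n)), by
        rintro (a | tb) (a' | tb') h <;> simp only [Sum.elim_inl, Sum.elim_inr] at h
        · rw [q.1.injective (Subtype.ext h)]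
        · exact absurd ((q.1 a).2) (by rw [h]; exact (q.2.1 tb').2.1)
        · exact absurd ((q.1 a').2) (by rw [← h]; exact (q.2.1 tb).2.1)
        · rw [q.2.1.injective (Subtype.ext h)]⟩, by
      rintro (a | ⟨t, b⟩)
      · exact (q.1 a).2
      · simp only [Function.Embedding.coeFn_mk, Sum.elim_inr, sig0_inr]
        have := congrArg Subtype.val (q.2.2 t b)
        exact this.symm⟩
  left_inv := by
    rintro ⟨u, hu⟩
    apply Subtype.ext
    apply Function.Embedding.ext
    rintro (a | tb) <;> rfl
  right_inv := by
    rintro ⟨v, ⟨w, hw⟩⟩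
    refine Prod.ext ?_ ?_
    · apply Function.Embedding.ext
      intro a
      apply Subtype.ext
      rfl
    · apply Subtype.ext
      apply Function.Embedding.ext
      intro tb
      apply Subtype.ext
      rfl

lemma card_contains (π : Equiv.Perm (Fin n)) (i j : ℕ) :
    Nat.card {u : Dt i j ↪ Fin n // Contains π u} =
      (Nat.card (Fx π)).descFactorial i * ((Nat.card (Qt π)).descFactorial j * 2 ^ j) := by
  classical
  rw [Nat.card_congr (equivB1 π i j), Nat.card_prod, card_E]
  congr 1
  rw [Nat.card_eq_fintype_card, Nat.card_eq_fintype_card, Fintype.card_embedding_eq,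
    Fintype.card_fin]



lemma alt_sum (T m : ℕ) (h : T < m) :
    ∑ j ∈ Finset.range m, (-1 : ℝ) ^ j * (T.choose j : ℝ) = if T = 0 then 1 else 0 := by
  have hsub : Finset.range (T + 1) ⊆ Finset.range m := Finset.range_subset_range.2 h
  rw [← Finset.sum_subset hsub (fun x _ hnx => by
    have hx : T < x := by simpa using hnx
    rw [Nat.choose_eq_zero_of_lt hx]
    simp)]
  rw [show (if T = 0 then (1 : ℝ) else 0) = (((if T = 0 then 1 else 0 : ℤ)) : ℝ) by
    split_ifs <;> simp]
  exact_mod_cast Int.alternating_sum_range_choose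

lemma alt_sum_weighted (F m : ℕ) (h : F < m) :
    ∑ i ∈ Finset.range m, (-1 : ℝ) ^ i * (1 - (i : ℝ)) * (F.choose i : ℝ) =
      if F ≤ 1 then 1 else 0 := by
  have split : ∀ i ∈ Finset.range m, (-1 : ℝ) ^ i * (1 - (i : ℝ)) * (F.choose i : ℝ) =
      (-1 : ℝ) ^ i * (F.choose i : ℝ) - (-1 : ℝ) ^ i * (i : ℝ) * (F.choose i : ℝ) := by
    intro i _; ring
  rw [Finset.sum_congr rfl split, Finset.sum_sub_distrib, alt_sum F m h]
  have hS1 : ∑ i ∈ Finset.range m, (-1 : ℝ) ^ i * (i : ℝ) * (F.choose i : ℝ) =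
      if F = 1 then -1 else 0 := by
    obtain ⟨m', rfl⟩ : ∃ m', m = m' + 1 := ⟨m - 1, by omega⟩
    rw [Finset.sum_range_succ']
    simp only [Nat.cast_zero, mul_zero, zero_mul, add_zero, pow_zero]
    rcases Nat.eq_zero_or_pos F with hF | hF
    · subst hF
      rw [if_neg (by norm_num)]
      apply Finset.sum_eq_zero
      intro k _
      rw [Nat.choose_eq_zero_of_lt (by omega)]
      simp
    · obtain ⟨F', rfl⟩ : ∃ F', F = F' + 1 := ⟨F - 1, by omega⟩
      have key : ∀ k : ℕ, ((F' + 1).choose (k + 1) : ℝ) * ((k : ℝ) + 1) =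
          ((F' : ℝ) + 1) * (F'.choose k : ℝ) := by
        intro k
        have h2 : ((F'.succ * F'.choose k : ℕ) : ℝ) = ((F'.succ.choose k.succ * k.succ : ℕ) : ℝ) :=
          congrArg _ (Nat.add_one_mul_choose_eq F' k)
        push_cast at h2
        linarith [h2]
      have hstep : ∀ k ∈ Finset.range m', (-1 : ℝ) ^ (k + 1) * ((k + 1 : ℕ) : ℝ) *
          ((F' + 1).choose (k + 1) : ℝ) =
          -(((F' : ℝ) + 1) * ((-1 : ℝ) ^ k * (F'.choose k : ℝ))) := by
        intro k _
        have hk := key k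
        push_cast
        linear_combination (-(-1 : ℝ) ^ k) * hk
      rw [Finset.sum_congr rfl hstep]
      rw [show (∑ k ∈ Finset.range m', -(((F' : ℝ) + 1) * ((-1 : ℝ) ^ k * (F'.choose k : ℝ))))
          = -(((F' : ℝ) + 1) * ∑ k ∈ Finset.range m', (-1 : ℝ) ^ k * (F'.choose k : ℝ)) by
        rw [Finset.mul_sum, ← Finset.sum_neg_distrib]]
      rw [alt_sum F' m' (by omega)]
      rcases Nat.eq_zero_or_pos F' with h0 | h0
      · subst h0; norm_num
      · rw [if_neg (by omega), if_neg (by omega)]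
        simp
  rw [hS1]
  rcases Nat.lt_or_ge F 2 with h2 | h2
  · interval_cases F <;> norm_num
  · rw [if_neg (by omega), if_neg (by omega), if_neg (by omega)]
    simp


lemma sum_card_eq {A B : Type*} [Fintype A] [Fintype B] (R : A → B → Prop) :
    ∑ x : A, Nat.card {y : B // R x y} = ∑ y : B, Nat.card {x : A // R x y} := by
  classical
  calc ∑ x : A, Nat.card {y : B // R x y}
      = ∑ x : A, Fintype.card {y : B // R x y} := by
        simp only [Nat.card_eq_fintype_card]
    _ = Fintype.card ((x : A) × {y : B // R x y}) := Fintype.card_sigma.symm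
    _ = Fintype.card {p : A × B // R p.1 p.2} :=
        (Fintype.card_congr (Equiv.subtypeProdEquivSigmaSubtype R)).symm
    _ = Fintype.card {p : B × A // R p.2 p.1} :=
        Fintype.card_congr ((Equiv.prodComm A B).subtypeEquiv (fun p => Iff.rfl))
    _ = Fintype.card ((y : B) × {x : A // R x y}) :=
        Fintype.card_congr (Equiv.subtypeProdEquivSigmaSubtype (fun (y : B) (x : A) => R x y))
    _ = ∑ y : B, Nat.card {x : A // R x y} := by
        rw [Fintype.card_sigma]
        simp only [Nat.card_eq_fintype_card]

variable {n : ℕ}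

lemma card_Dt (i j : ℕ) : Fintype.card (Dt i j) = i + 2 * j := by
  simp [Dt, Fintype.card_sum, Fintype.card_prod]
  ring

lemma sum_contains (i j : ℕ) :
    ∑ π : Equiv.Perm (Fin n),
      ((Nat.card (Fx π)).descFactorial i * ((Nat.card (Qt π)).descFactorial j * 2 ^ j)) =
      n.descFactorial (i + 2 * j) * (n - (i + 2 * j)).factorial := by
  classical
  calc ∑ π : Equiv.Perm (Fin n),
      ((Nat.card (Fx π)).descFactorial i * ((Nat.card (Qt π)).descFactorial j * 2 ^ j))
      = ∑ π : Equiv.Perm (Fin n), Nat.card {u : Dt i j ↪ Fin n // Contains π u} := by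
        apply Finset.sum_congr rfl
        intro π _
        exact (card_contains π i j).symm
    _ = ∑ u : Dt i j ↪ Fin n, Nat.card {π : Equiv.Perm (Fin n) // Contains π u} :=
        sum_card_eq (fun π u => Contains π u)
    _ = ∑ _u : Dt i j ↪ Fin n, (n - (i + 2 * j)).factorial := by
        apply Finset.sum_congr rfl
        intro u _
        rw [show Nat.card {π : Equiv.Perm (Fin n) // Contains π u} =
          (Fintype.card (Fin n) - Fintype.card (Dt i j)).factorial from card_ext u (sig0 i j),
          card_Dt, Fintype.card_fin]
    _ = n.descFactorial (i + 2 * j) * (n - (i + 2 * j)).factorial := by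
        rw [Finset.sum_const, Finset.card_univ, smul_eq_mul, Fintype.card_embedding_eq,
          card_Dt, Fintype.card_fin]

/-- Weight for the fixed-point part. -/
def aR (i : ℕ) : ℝ := (-1) ^ i * (1 - (i : ℝ)) / (i.factorial : ℝ)

/-- Weight for the 2-cycle part. -/
def bR (j : ℕ) : ℝ := (-1) ^ j / ((j.factorial : ℝ) * 2 ^ j)

lemma aR_mul (F i : ℕ) : aR i * ((F.descFactorial i : ℕ) : ℝ) =
    (-1) ^ i * (1 - (i : ℝ)) * (F.choose i : ℝ) := by
  rw [aR, Nat.descFactorial_eq_factorial_mul_choose]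
  push_cast
  have : (i.factorial : ℝ) ≠ 0 := by exact_mod_cast i.factorial_ne_zero
  field_simp

lemma bR_mul (T j : ℕ) : bR j * ((T.descFactorial j * 2 ^ j : ℕ) : ℝ) =
    (-1) ^ j * (T.choose j : ℝ) := by
  rw [bR, Nat.descFactorial_eq_factorial_mul_choose]
  push_cast
  have h1 : (j.factorial : ℝ) ≠ 0 := by exact_mod_cast j.factorial_ne_zero
  have h2 : (2 : ℝ) ^ j ≠ 0 := by positivity
  field_simp

lemma perPi (π : Equiv.Perm (Fin n)) :
    (if Nat.card (Fx π) ≤ 1 ∧ Nat.card (Qt π) = 0 then (1 : ℝ) else 0) =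
      ∑ i ∈ Finset.range (n + 1), ∑ j ∈ Finset.range (n + 1),
        (aR i * bR j) *
          (((Nat.card (Fx π)).descFactorial i *
            ((Nat.card (Qt π)).descFactorial j * 2 ^ j) : ℕ) : ℝ) := by
  classical
  have hF : Nat.card (Fx π) ≤ n := by
    rw [Nat.card_eq_fintype_card]
    exact le_trans (Fintype.card_subtype_le _) (le_of_eq (Fintype.card_fin n))
  have hT : Nat.card (Qt π) ≤ n := by
    refine le_trans (Nat.card_le_card_of_surjective _ (Quotient.mk_surjective)) ?_
    have : Nat.card (Pt π) ≤ Nat.card (Fin n) := Finite.card_subtype_le _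
    simpa [Nat.card_eq_fintype_card] using this
  set F := Nat.card (Fx π)
  set T := Nat.card (Qt π)
  have hsplit : ∀ i ∈ Finset.range (n + 1), ∀ j ∈ Finset.range (n + 1),
      (aR i * bR j) * ((F.descFactorial i * (T.descFactorial j * 2 ^ j) : ℕ) : ℝ) =
      (aR i * ((F.descFactorial i : ℕ) : ℝ)) * (bR j * ((T.descFactorial j * 2 ^ j : ℕ) : ℝ)) := by
    intro i _ j _
    push_cast
    ring
  calc (if F ≤ 1 ∧ T = 0 then (1 : ℝ) else 0)
      = (if F ≤ 1 then (1 : ℝ) else 0) * (if T = 0 then (1 : ℝ) else 0) := by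
        by_cases h1 : F ≤ 1 <;> by_cases h2 : T = 0 <;> simp [h1, h2]
    _ = (∑ i ∈ Finset.range (n + 1), aR i * ((F.descFactorial i : ℕ) : ℝ)) *
          (∑ j ∈ Finset.range (n + 1), bR j * ((T.descFactorial j * 2 ^ j : ℕ) : ℝ)) := by
        congr 1
        · rw [← alt_sum_weighted F (n + 1) (by omega)]
          exact (Finset.sum_congr rfl (fun i _ => aR_mul F i)).symm
        · rw [← alt_sum T (n + 1) (by omega)]
          exact (Finset.sum_congr rfl (fun j _ => bR_mul T j)).symm
    _ = ∑ i ∈ Finset.range (n + 1), ∑ j ∈ Finset.range (n + 1),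
          (aR i * ((F.descFactorial i : ℕ) : ℝ)) * (bR j * ((T.descFactorial j * 2 ^ j : ℕ) : ℝ)) :=
        Finset.sum_mul_sum _ _ _ _
    _ = _ := by
        apply Finset.sum_congr rfl
        intro i hi
        apply Finset.sum_congr rfl
        intro j hj
        exact (hsplit i hi j hj).symm


def Mcount (n : ℕ) : ℕ :=
  Nat.card {π : Equiv.Perm (Fin n) // Nat.card (Fx π) ≤ 1 ∧ Nat.card (Qt π) = 0}

lemma Mcount_cast (n : ℕ) : (Mcount n : ℝ) =
    ∑ π : Equiv.Perm (Fin n),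
      (if Nat.card (Fx π) ≤ 1 ∧ Nat.card (Qt π) = 0 then (1 : ℝ) else 0) := by
  classical
  rw [Finset.sum_boole, Mcount, Nat.card_eq_fintype_card, Fintype.card_subtype]

lemma Mn_formula (n : ℕ) : (Mcount n : ℝ) =
    ∑ i ∈ Finset.range (n + 1), ∑ j ∈ Finset.range (n + 1),
      (aR i * bR j) * ((n.descFactorial (i + 2 * j) * (n - (i + 2 * j)).factorial : ℕ) : ℝ) := by
  classical
  calc (Mcount n : ℝ)
      = ∑ π : Equiv.Perm (Fin n), ∑ i ∈ Finset.range (n + 1), ∑ j ∈ Finset.range (n + 1),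
          (aR i * bR j) *
            (((Nat.card (Fx π)).descFactorial i *
              ((Nat.card (Qt π)).descFactorial j * 2 ^ j) : ℕ) : ℝ) := by
        rw [Mcount_cast]
        exact Finset.sum_congr rfl (fun π _ => perPi π)
    _ = ∑ i ∈ Finset.range (n + 1), ∑ π : Equiv.Perm (Fin n), ∑ j ∈ Finset.range (n + 1),
          (aR i * bR j) *
            (((Nat.card (Fx π)).descFactorial i *
              ((Nat.card (Qt π)).descFactorial j * 2 ^ j) : ℕ) : ℝ) := Finset.sum_comm
    _ = ∑ i ∈ Finset.range (n + 1), ∑ j ∈ Finset.range (n + 1), ∑ π : Equiv.Perm (Fin n),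
          (aR i * bR j) *
            (((Nat.card (Fx π)).descFactorial i *
              ((Nat.card (Qt π)).descFactorial j * 2 ^ j) : ℕ) : ℝ) :=
        Finset.sum_congr rfl (fun i _ => Finset.sum_comm)
    _ = _ := by
        apply Finset.sum_congr rfl
        intro i _
        apply Finset.sum_congr rfl
        intro j _
        rw [← Finset.mul_sum]
        congr 1
        rw [← Nat.cast_sum]
        exact Nat.cast_inj.mpr (sum_contains i j)

/-- The region of summation. -/
def region (n : ℕ) : Finset (ℕ × ℕ) :=
  (Finset.range (n + 1) ×ˢ Finset.range (n + 1)).filter (fun p => p.1 + 2 * p.2 ≤ n)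

/-- Partial sums. -/
def Sn (n : ℕ) : ℝ := ∑ p ∈ region n, aR p.1 * bR p.2

lemma Mdiv (n : ℕ) : (Mcount n : ℝ) / (n.factorial : ℝ) = Sn n := by
  classical
  have hfac : (n.factorial : ℝ) ≠ 0 := by exact_mod_cast n.factorial_ne_zero
  rw [Mn_formula, Sn, region, Finset.sum_filter, Finset.sum_product, Finset.sum_div]
  apply Finset.sum_congr rfl
  intro i _
  rw [Finset.sum_div]
  apply Finset.sum_congr rfl
  intro j _
  by_cases h : i + 2 * j ≤ n
  · rw [if_pos h]
    have : n.descFactorial (i + 2 * j) * (n - (i + 2 * j)).factorial = n.factorial := by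
      rw [mul_comm]
      exact Nat.factorial_mul_descFactorial h
    rw [this]
    field_simp
  · rw [if_neg h]
    rw [Nat.descFactorial_eq_zero_iff_lt.2 (by omega)]
    simp

lemma not_hasInv_iff (n : ℕ) (π : Equiv.Perm (Fin n)) :
    ¬ hasInvariantSet n 2 π ↔ (Nat.card (Fx π) ≤ 1 ∧ Nat.card (Qt π) = 0) := by
  classical
  have hQt : Nat.card (Qt π) ≠ 0 ↔ Nonempty (Pt π) := by
    rw [Nat.card_eq_fintype_card]
    constructor
    · intro h
      have : Nonempty (Qt π) := Fintype.card_pos_iff.1 (Nat.pos_of_ne_zero h)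
      obtain ⟨q⟩ := this
      exact ⟨q.out⟩
    · rintro ⟨x⟩
      have : Nonempty (Qt π) := ⟨(⟦x⟧ : Qt π)⟩
      have := Fintype.card_pos_iff.2 this
      omega
  have key : hasInvariantSet n 2 π ↔ (1 < Nat.card (Fx π) ∨ Nat.card (Qt π) ≠ 0) := by
    constructor
    · rintro ⟨s, hcard, hinv⟩
      obtain ⟨x, y, hxy, rfl⟩ := Finset.card_eq_two.1 hcard
      have hx : π x = x ∨ π x = y := by
        have := hinv x (by simp)
        simpa using this
      have hy : π y = x ∨ π y = y := by
        have := hinv y (by simp)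
        simpa using this
      rcases hx with hx | hx
      · have hy' : π y = y := by
          rcases hy with hy | hy
          · exact (Ne.symm hxy (π.injective (hx.symm ▸ hy : π y = π x))).elim
          · exact hy
        left
        rw [Nat.card_eq_fintype_card, Fintype.one_lt_card_iff]
        exact ⟨⟨x, hx⟩, ⟨y, hy'⟩, fun hc => hxy (congrArg Subtype.val hc)⟩
      · have hy' : π y = x := by
          rcases hy with hy | hy
          · exact hy
          · exact (hxy (π.injective (hx.trans hy.symm))).elim
        right
        rw [hQt]
        exact ⟨⟨x, by rw [hx]; exact hxy.symm, by rw [hx, hy']⟩⟩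
    · rintro (h | h)
      · rw [Nat.card_eq_fintype_card, Fintype.one_lt_card_iff] at h
        obtain ⟨⟨x, hx⟩, ⟨y, hy⟩, hne⟩ := h
        have hxy : x ≠ y := fun hc => hne (Subtype.ext hc)
        refine ⟨{x, y}, Finset.card_pair hxy, ?_⟩
        intro z hz
        rcases Finset.mem_insert.1 hz with rfl | hz
        · rw [hx]; exact Finset.mem_insert_self _ _
        · rw [Finset.mem_singleton.1 hz, hy]
          exact Finset.mem_insert_of_mem (Finset.mem_singleton_self _)
      · obtain ⟨x⟩ := hQt.1 h
        refine ⟨{(x : Fin n), π x}, Finset.card_pair (Ne.symm x.2.1), ?_⟩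
        intro z hz
        rcases Finset.mem_insert.1 hz with rfl | hz
        · exact Finset.mem_insert_of_mem (Finset.mem_singleton_self _)
        · rw [Finset.mem_singleton.1 hz, x.2.2]
          exact Finset.mem_insert_self _ _
  rw [key]
  push_neg
  constructor
  · rintro ⟨h1, h2⟩; exact ⟨by omega, by omega⟩
  · rintro ⟨h1, h2⟩; exact ⟨by omega, by omega⟩

lemma iProp_eq (n : ℕ) : iProp n 2 = 1 - (Mcount n : ℝ) / (n.factorial : ℝ) := by
  classical
  have hperm : Fintype.card (Equiv.Perm (Fin n)) = n.factorial := by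
    rw [Fintype.card_perm, Fintype.card_fin]
  have hM : Mcount n = Fintype.card {π : Equiv.Perm (Fin n) // ¬ hasInvariantSet n 2 π} := by
    rw [Mcount, Nat.card_congr (Equiv.subtypeEquivRight (fun π => (not_hasInv_iff n π).symm)),
      Nat.card_eq_fintype_card]
  have hcompl : Fintype.card {π : Equiv.Perm (Fin n) // ¬ hasInvariantSet n 2 π} =
      Fintype.card (Equiv.Perm (Fin n)) -
        Fintype.card {π : Equiv.Perm (Fin n) // hasInvariantSet n 2 π} :=
    Fintype.card_subtype_compl _
  have hle : Fintype.card {π : Equiv.Perm (Fin n) // hasInvariantSet n 2 π} ≤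
      Fintype.card (Equiv.Perm (Fin n)) := Fintype.card_subtype_le _
  have hfac : (n.factorial : ℝ) ≠ 0 := by exact_mod_cast n.factorial_ne_zero
  have hcount : Nat.card {π : Equiv.Perm (Fin n) // hasInvariantSet n 2 π} =
      n.factorial - Mcount n := by
    rw [Nat.card_eq_fintype_card, hM]
    omega
  rw [iProp, hcount, Nat.card_eq_fintype_card, hperm]
  have hMle : Mcount n ≤ n.factorial := by
    rw [hM]
    omega
  rw [Nat.cast_sub hMle]
  field_simp

lemma tsum_exp (x : ℝ) : ∑' k : ℕ, x ^ k / (k.factorial : ℝ) = Real.exp x := by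
  rw [Real.exp_eq_exp_ℝ, NormedSpace.exp_eq_tsum_div]

lemma summable_one_div_fact : Summable (fun k : ℕ => 1 / (k.factorial : ℝ)) := by
  simpa using Real.summable_pow_div_factorial 1

lemma fact_succ_div (k : ℕ) :
    ((k + 1 : ℕ) : ℝ) / (((k + 1 : ℕ)).factorial : ℝ) = 1 / (k.factorial : ℝ) := by
  rw [Nat.factorial_succ]
  have h1 : (k.factorial : ℝ) ≠ 0 := by exact_mod_cast k.factorial_ne_zero
  push_cast
  have h2 : ((k : ℝ) + 1) ≠ 0 := by positivity
  field_simp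

lemma summable_id_div_fact : Summable (fun k : ℕ => (k : ℝ) / (k.factorial : ℝ)) := by
  rw [← summable_nat_add_iff 1]
  exact Summable.congr summable_one_div_fact (fun k => (fact_succ_div k).symm)

lemma summable_abs_aR : Summable (fun i => |aR i|) := by
  have hs : Summable (fun i : ℕ => (1 + (i : ℝ)) / (i.factorial : ℝ)) :=
    Summable.congr (summable_one_div_fact.add summable_id_div_fact)
      (fun i => by rw [← add_div])
  apply Summable.of_nonneg_of_le (fun i => abs_nonneg _) (fun i => ?_) hs
  have h1 : (0 : ℝ) < (i.factorial : ℝ) := by exact_mod_cast i.factorial_pos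
  have : |aR i| = |1 - (i : ℝ)| / (i.factorial : ℝ) := by
    rw [aR, abs_div, abs_mul, abs_pow, abs_neg, abs_one, one_pow, one_mul, abs_of_pos h1]
  rw [this]
  apply (div_le_div_iff_of_pos_right h1).2
  calc |1 - (i : ℝ)| ≤ |(1 : ℝ)| + |(i : ℝ)| := abs_sub _ _
    _ = 1 + (i : ℝ) := by rw [abs_one, abs_of_nonneg (by positivity : (0:ℝ) ≤ (i : ℝ))]

lemma bR_eq (j : ℕ) : bR j = (-(1/2) : ℝ) ^ j / (j.factorial : ℝ) := by
  have h1 : (j.factorial : ℝ) ≠ 0 := by exact_mod_cast j.factorial_ne_zero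
  have h2 : ((2 : ℝ)) ^ j ≠ 0 := by positivity
  rw [bR, show (-(1/2) : ℝ) = (-1) * (1/2) by norm_num, mul_pow]
  rw [div_pow, one_pow]
  field_simp

lemma summable_abs_bR : Summable (fun j => |bR j|) := by
  have hs : Summable (fun j : ℕ => (1/2 : ℝ) ^ j / (j.factorial : ℝ)) :=
    Real.summable_pow_div_factorial (1/2)
  apply Summable.of_nonneg_of_le (fun j => abs_nonneg _) (fun j => ?_) hs
  have h1 : (0 : ℝ) < (j.factorial : ℝ) := by exact_mod_cast j.factorial_pos
  rw [bR_eq, abs_div, abs_pow, abs_neg, abs_of_pos h1]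
  rw [show |(1/2 : ℝ)| = 1/2 by norm_num]

lemma summable_aR : Summable aR := summable_abs_aR.of_abs

lemma shift_term (k : ℕ) : (-1 : ℝ) ^ (k + 1) * ((k + 1 : ℕ) : ℝ) /
    (((k + 1 : ℕ)).factorial : ℝ) = -((-1 : ℝ) ^ k / (k.factorial : ℝ)) := by
  rw [pow_succ, Nat.factorial_succ]
  have h1 : (k.factorial : ℝ) ≠ 0 := by exact_mod_cast k.factorial_ne_zero
  push_cast
  have h2 : ((k : ℝ) + 1) ≠ 0 := by positivity
  field_simp

lemma summable_f2 : Summable (fun i : ℕ => (-1 : ℝ) ^ i * (i : ℝ) / (i.factorial : ℝ)) := by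
  rw [← summable_nat_add_iff 1]
  exact Summable.congr (Real.summable_pow_div_factorial (-1)).neg
    (fun k => (shift_term k).symm)

lemma tsum_aR : ∑' i, aR i = 2 * Real.exp (-1) := by
  have hf1 : Summable (fun i : ℕ => (-1 : ℝ) ^ i / (i.factorial : ℝ)) :=
    Real.summable_pow_div_factorial (-1)
  have haR : aR = fun i : ℕ =>
      (-1 : ℝ) ^ i / (i.factorial : ℝ) - (-1 : ℝ) ^ i * (i : ℝ) / (i.factorial : ℝ) := by
    funext i
    rw [aR]
    ring
  rw [haR, Summable.tsum_sub hf1 summable_f2]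
  have h1 : ∑' i : ℕ, (-1 : ℝ) ^ i / (i.factorial : ℝ) = Real.exp (-1) := by
    rw [← tsum_exp (-1)]
  have h2 : ∑' i : ℕ, (-1 : ℝ) ^ i * (i : ℝ) / (i.factorial : ℝ) = -Real.exp (-1) := by
    rw [Summable.tsum_eq_zero_add summable_f2]
    rw [tsum_congr (fun k => shift_term k), tsum_neg, ← tsum_exp (-1)]
    simp
  rw [h1, h2]
  ring

lemma tsum_bR : ∑' j, bR j = Real.exp (-(1/2)) := by
  rw [tsum_congr bR_eq, tsum_exp (-(1/2))]

lemma region_mono : Monotone region := by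
  intro m m' h p hp
  simp only [region, Finset.mem_filter, Finset.mem_product, Finset.mem_range] at *
  omega

lemma region_exh : ∀ p : ℕ × ℕ, ∃ m, p ∈ region m := by
  intro p
  refine ⟨p.1 + 2 * p.2, ?_⟩
  simp only [region, Finset.mem_filter, Finset.mem_product, Finset.mem_range]
  omega

lemma tendsto_Sn :
    Filter.Tendsto Sn Filter.atTop (nhds (2 * Real.exp (-(3/2 : ℝ)))) := by
  have hna : Summable (fun i => ‖aR i‖) := by
    simpa only [Real.norm_eq_abs] using summable_abs_aR
  have hnb : Summable (fun j => ‖bR j‖) := by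
    simpa only [Real.norm_eq_abs] using summable_abs_bR
  have hsum : Summable (fun p : ℕ × ℕ => aR p.1 * bR p.2) :=
    summable_mul_of_summable_norm hna hnb
  have hlim : Filter.Tendsto (fun m => ∑ p ∈ region m, aR p.1 * bR p.2)
      Filter.atTop (nhds (∑' p : ℕ × ℕ, aR p.1 * bR p.2)) :=
    hsum.hasSum.comp (Filter.tendsto_atTop_finset_of_monotone region_mono region_exh)
  have hval : (∑' p : ℕ × ℕ, aR p.1 * bR p.2) = 2 * Real.exp (-(3/2 : ℝ)) := by
    rw [← tsum_mul_tsum_of_summable_norm hna hnb, tsum_aR, tsum_bR, mul_assoc, ← Real.exp_add]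
    norm_num
  rw [← hval]
  exact hlim

end IProp2


theorem i_infty_two :
    Filter.Tendsto (fun n => iProp n 2) Filter.atTop
      (nhds (1 - 2 * Real.exp (-(3/2 : ℝ)))) := by
  have h : ∀ n, iProp n 2 = 1 - IProp2.Sn n := fun n => by
    rw [IProp2.iProp_eq, IProp2.Mdiv]
  simp only [h]
  exact Filter.Tendsto.const_sub 1 IProp2.tendsto_Sn
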